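/- arXiv:1307.5019 — 2 statements merged into one kernel-verified Lean document; each statement's English description precedes it below -/
import Mathlib

section
/- Let λ > 0. There exists a constant C = C(λ) > 0 such that for all x, y, t > 0 one has W_t^λ(x,y) ≤ C (4πt)^{−1/2} e^{−(x−y)²/(4t)}; that is, the Bessel heat kernel is dominated by a constant multiple of the Gauss–Weierstrass kernel on the real line. -/
open Real MeasureTheory Set Filter

noncomputable section

/-- The modified Bessel function of the first kind `I_ν(z)`. -/
def besselI (ν z : ℝ) : ℝ :=
  ∑' k : ℕ, (z / 2) ^ (2 * (k : ℝ) + ν) / ((Nat.factorial k : ℝ) * Real.Gamma ((k : ℝ) + ν + 1))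

/-- The Bessel heat kernel `W_t^λ(x,y)`. -/
def besselHeatKernel (lam t x y : ℝ) : ℝ :=
  Real.sqrt (x * y) / (2 * t) * besselI (lam - 1 / 2) (x * y / (2 * t)) *
    Real.exp (-(x ^ 2 + y ^ 2) / (4 * t))

/-- The Bessel–Poisson kernel `P_t^λ(x,y)`, obtained by subordination. -/
def besselPoissonKernel (lam t x y : ℝ) : ℝ :=
  t / (2 * Real.sqrt Real.pi) *
    ∫ s in Set.Ioi (0 : ℝ),
      s ^ (-(3 : ℝ) / 2) * Real.exp (-t ^ 2 / (4 * s)) * besselHeatKernel lam s x y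

/-- The Bessel heat semigroup `W_t^λ u (x)`. -/
def heatSemigroup (lam : ℝ) (u : ℝ → ℝ) (t x : ℝ) : ℝ :=
  ∫ y in Set.Ioi (0 : ℝ), besselHeatKernel lam t x y * u y

/-- The Bessel–Poisson semigroup `P_t^λ f (x)`. -/
def poissonSemigroup (lam : ℝ) (f : ℝ → ℝ) (t x : ℝ) : ℝ :=
  ∫ y in Set.Ioi (0 : ℝ), besselPoissonKernel lam t x y * f y

/-- The set of Hölder quotients of `f` on `(0,∞)`. -/
def holderRatioSet (α : ℝ) (f : ℝ → ℝ) : Set ℝ :=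
  {r | ∃ x y : ℝ, 0 < x ∧ 0 < y ∧ x ≠ y ∧ r = |f x - f y| / |x - y| ^ α}

/-- The set of growth quotients `|f x|/x^α` of `f` on `(0,∞)`. -/
def growthRatioSet (α : ℝ) (f : ℝ → ℝ) : Set ℝ :=
  {r | ∃ x : ℝ, 0 < x ∧ r = |f x| / x ^ α}

/-- Membership in the Hölder space `C^α_+` (equal to `Lip_+` when `α = 1`). -/
def MemHolderPlus (α : ℝ) (f : ℝ → ℝ) : Prop :=
  ContinuousOn f (Set.Ioi 0) ∧ BddAbove (holderRatioSet α f) ∧ BddAbove (growthRatioSet α f)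

/-- The `C^α_+` norm. -/
def holderPlusNorm (α : ℝ) (f : ℝ → ℝ) : ℝ :=
  sSup (holderRatioSet α f) + sSup (growthRatioSet α f)

/-- `Γ(-σ)`, written through the functional equation `Γ(-σ) = Γ(2-σ)/((-σ)(1-σ))`. -/
def gammaNeg (σ : ℝ) : ℝ := Real.Gamma (2 - σ) / (-σ * (1 - σ))

/-- The kernel `K_σ^λ(x,y)`. -/
def fracKernelK (lam σ x y : ℝ) : ℝ :=
  1 / (-gammaNeg σ) * ∫ t in Set.Ioi (0 : ℝ), besselHeatKernel lam t x y * t ^ (-1 - σ)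

/-- `W_t^λ 1 (x)`. -/
def heatOne (lam t x : ℝ) : ℝ := ∫ y in Set.Ioi (0 : ℝ), besselHeatKernel lam t x y

/-- The function `B_σ^λ(x)`. -/
def fracFunB (lam σ x : ℝ) : ℝ :=
  1 / gammaNeg σ * ∫ t in Set.Ioi (0 : ℝ), (heatOne lam t x - 1) * t ^ (-1 - σ)

/-- The integer `m` with `m - 1 ≤ β < m`. -/
def fracOrder (β : ℝ) : ℕ := Nat.floor β + 1

/-- The Segovia–Wheeden fractional derivative `∂_t^β F(t)`, a complex number. -/
def fracDeriv (β : ℝ) (F : ℝ → ℝ) (t : ℝ) : ℂ :=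
  Complex.exp (-(Real.pi * ((fracOrder β : ℝ) - β)) * Complex.I) /
      Complex.ofReal (Real.Gamma ((fracOrder β : ℝ) - β)) *
    Complex.ofReal
      (∫ s in Set.Ioi (0 : ℝ),
        iteratedDeriv (fracOrder β) F (t + s) * s ^ ((fracOrder β : ℝ) - β - 1))
-- Wendel's inequality
lemma wendel {x s : ℝ} (hx : 0 < x) (hs0 : 0 ≤ s) (hs1 : s ≤ 1) :
    Real.Gamma (x + s) ≤ x ^ s * Real.Gamma x := by
  have h := Real.convexOn_log_Gamma.2 (Set.mem_Ioi.2 hx)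
    (Set.mem_Ioi.2 (by linarith : (0:ℝ) < x + 1))
    (by linarith : (0:ℝ) ≤ 1 - s) hs0 (by ring)
  simp only [smul_eq_mul, Function.comp_apply] at h
  have hxs : (1 - s) * x + s * (x + 1) = x + s := by ring
  rw [hxs] at h
  have h1 : Real.log (Real.Gamma (x+1)) = Real.log x + Real.log (Real.Gamma x) := by
    rw [Real.Gamma_add_one hx.ne', Real.log_mul hx.ne' (Real.Gamma_pos_of_pos hx).ne']
  rw [h1] at h
  have h2 : Real.log (Real.Gamma (x+s)) ≤ s * Real.log x + Real.log (Real.Gamma x) := by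
    nlinarith
  have hg : 0 < Real.Gamma (x + s) := Real.Gamma_pos_of_pos (by linarith)
  calc Real.Gamma (x+s) = Real.exp (Real.log (Real.Gamma (x+s))) := (Real.exp_log hg).symm
    _ ≤ Real.exp (s * Real.log x + Real.log (Real.Gamma x)) := Real.exp_le_exp.2 h2
    _ = x ^ s * Real.Gamma x := by
        rw [Real.exp_add, Real.exp_log (Real.Gamma_pos_of_pos hx), Real.rpow_def_of_pos hx, mul_comm s]

lemma gamma_nat_shift {x : ℝ} (hx : 0 < x) (n : ℕ) :
    Real.Gamma x * x ^ n ≤ Real.Gamma (x + n) := by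
  induction n with
  | zero => simp
  | succ n ih =>
    have hxn : (0:ℝ) < x + n := by positivity
    have h1 : Real.Gamma (x + (n+1:ℕ)) = (x + n) * Real.Gamma (x + n) := by
      push_cast
      rw [show x + ((n:ℝ)+1) = (x + n) + 1 by ring, Real.Gamma_add_one hxn.ne']
    rw [h1, pow_succ]
    calc Real.Gamma x * (x ^ n * x) = x * (Real.Gamma x * x ^ n) := by ring
      _ ≤ (x + n) * Real.Gamma (x + n) := by
          apply mul_le_mul (by linarith) ih (by positivity) hxn.le

lemma gamma_lower {ν : ℝ} (hν : -(1/2) < ν) (k : ℕ) :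
    1/2 * (k.factorial : ℝ) * ((k:ℝ)+1) ^ ν ≤ Real.Gamma ((k:ℝ) + ν + 1) := by
  rcases le_or_gt 0 ν with hν0 | hν0
  · -- ν ≥ 0
    set n : ℕ := ⌊ν⌋₊ with hn
    set s : ℝ := ν - n with hs
    have hs0 : 0 ≤ s := by
      have := Nat.floor_le hν0
      simp only [hs]; linarith
    have hs1 : s < 1 := by
      have := Nat.lt_floor_add_one ν
      simp only [hs]; linarith
    have hk1 : (0:ℝ) < (k:ℝ) + 1 := by positivity
    -- Step A : Γ(k+1+s) ≥ (1/2) k! (k+1)^s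
    have hA : 1/2 * (k.factorial : ℝ) * ((k:ℝ)+1) ^ s ≤ Real.Gamma ((k:ℝ)+1+s) := by
      have hw := wendel (x := (k:ℝ)+1+s) (s := 1-s) (by positivity) (by linarith) (by linarith)
      have he : ((k:ℝ)+1+s) + (1-s) = (k:ℝ)+2 := by ring
      rw [he] at hw
      have hfac : Real.Gamma ((k:ℝ)+2) = ((k+1).factorial : ℝ) := by
        have := Real.Gamma_nat_eq_factorial (k+1)
        push_cast at this ⊢
        rw [show ((k:ℝ)+2) = (k:ℝ)+1+1 by ring, this]
      rw [hfac] at hw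
      -- hw : (k+1)! ≤ (k+1+s)^(1-s) * Γ(k+1+s)
      have hb : ((k:ℝ)+1+s) ^ (1-s) ≤ 2 * ((k:ℝ)+1) ^ (1-s) := by
        calc ((k:ℝ)+1+s) ^ (1-s) ≤ (2*((k:ℝ)+1)) ^ (1-s) := by
              apply Real.rpow_le_rpow (by positivity) (by linarith) (by linarith)
          _ = 2 ^ (1-s) * ((k:ℝ)+1) ^ (1-s) := Real.mul_rpow (by norm_num) hk1.le
          _ ≤ 2 * ((k:ℝ)+1) ^ (1-s) := by
              apply mul_le_mul_of_nonneg_right _ (Real.rpow_nonneg hk1.le _)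
              calc (2:ℝ) ^ (1-s) ≤ 2 ^ (1:ℝ) :=
                    Real.rpow_le_rpow_of_exponent_le (by norm_num) (by linarith)
                _ = 2 := Real.rpow_one 2
      have hg : 0 < Real.Gamma ((k:ℝ)+1+s) := Real.Gamma_pos_of_pos (by positivity)
      have hfac2 : ((k+1).factorial : ℝ) = ((k:ℝ)+1) * k.factorial := by
        push_cast [Nat.factorial_succ]; ring
      have h3 : ((k:ℝ)+1) * k.factorial ≤ 2 * ((k:ℝ)+1) ^ (1-s) * Real.Gamma ((k:ℝ)+1+s) := by
        rw [← hfac2]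
        calc ((k+1).factorial : ℝ) ≤ ((k:ℝ)+1+s) ^ (1-s) * Real.Gamma ((k:ℝ)+1+s) := hw
          _ ≤ 2 * ((k:ℝ)+1) ^ (1-s) * Real.Gamma ((k:ℝ)+1+s) :=
              mul_le_mul_of_nonneg_right hb hg.le
      -- divide: (k+1)^1 / (k+1)^(1-s) = (k+1)^s
      have hsplit : ((k:ℝ)+1) = ((k:ℝ)+1) ^ (1-s) * ((k:ℝ)+1) ^ s := by
        rw [← Real.rpow_add hk1]; norm_num
      have hrp : (0:ℝ) < ((k:ℝ)+1) ^ (1-s) := Real.rpow_pos_of_pos hk1 _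
      nlinarith [Real.rpow_pos_of_pos hk1 s, hg, hrp, h3,
        mul_pos hrp (Real.rpow_pos_of_pos hk1 s)]
    -- Step B
    have hB := gamma_nat_shift (x := (k:ℝ)+1+s) (by positivity) n
    have hpow : ((k:ℝ)+1) ^ (n:ℕ) ≤ ((k:ℝ)+1+s) ^ (n:ℕ) := by
      apply pow_le_pow_left₀ hk1.le (by linarith)
    have he2 : (k:ℝ) + ν + 1 = ((k:ℝ)+1+s) + n := by
      have : ν = n + s := by simp [hs]
      rw [this]; ring
    rw [he2]
    have hrpn : ((k:ℝ)+1) ^ (ν:ℝ) = ((k:ℝ)+1) ^ s * ((k:ℝ)+1) ^ (n:ℕ) := by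
      rw [← Real.rpow_natCast ((k:ℝ)+1) n, ← Real.rpow_add hk1]
      congr 1
      simp [hs]
    calc 1/2 * (k.factorial : ℝ) * ((k:ℝ)+1) ^ ν
        = (1/2 * (k.factorial : ℝ) * ((k:ℝ)+1) ^ s) * ((k:ℝ)+1) ^ (n:ℕ) := by
          rw [hrpn]; ring
      _ ≤ Real.Gamma ((k:ℝ)+1+s) * ((k:ℝ)+1+s) ^ (n:ℕ) := by
          apply mul_le_mul hA hpow (by positivity)
            (Real.Gamma_pos_of_pos (by positivity)).le
      _ ≤ Real.Gamma (((k:ℝ)+1+s) + n) := hB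
  · -- -1/2 < ν < 0
    have hx : (0:ℝ) < (k:ℝ) + ν + 1 := by
      have : (0:ℝ) ≤ (k:ℝ) := Nat.cast_nonneg k
      linarith
    have hw := wendel (x := (k:ℝ)+ν+1) (s := -ν) hx (by linarith) (by linarith)
    have he : ((k:ℝ)+ν+1) + -ν = (k:ℝ)+1 := by ring
    rw [he] at hw
    have hfac : Real.Gamma ((k:ℝ)+1) = (k.factorial : ℝ) := by
      exact_mod_cast Real.Gamma_nat_eq_factorial k
    rw [hfac] at hw
    have hg : 0 < Real.Gamma ((k:ℝ)+ν+1) := Real.Gamma_pos_of_pos hx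
    -- hw : k! ≤ (k+ν+1)^(-ν) * Γ
    -- so Γ ≥ k! * (k+ν+1)^ν ≥ k! (k+1)^ν ≥ (1/2) k! (k+1)^ν
    have h1 : ((k:ℝ)+1) ^ ν ≤ ((k:ℝ)+ν+1) ^ ν := by
      apply Real.rpow_le_rpow_of_nonpos hx (by linarith) hν0.le
    have h2 : (k.factorial:ℝ) * ((k:ℝ)+ν+1) ^ ν ≤ Real.Gamma ((k:ℝ)+ν+1) := by
      have hrp : (0:ℝ) < ((k:ℝ)+ν+1) ^ (-ν) := Real.rpow_pos_of_pos hx _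
      have hinv : ((k:ℝ)+ν+1) ^ (ν) * ((k:ℝ)+ν+1) ^ (-ν) = 1 := by
        rw [← Real.rpow_add hx]; simp
      nlinarith
    have hf : (0:ℝ) < k.factorial := by exact_mod_cast Nat.factorial_pos k
    nlinarith [Real.rpow_pos_of_pos (show (0:ℝ) < (k:ℝ)+1 by positivity) ν]

lemma catalan_nat (k : ℕ) : (k+1) * ((2*k).factorial)^2 ≤ (4^k * (k.factorial)^2)^2 := by
  induction k with
  | zero => simp
  | succ k ih =>
    have h1 : (2*(k+1)) = (2*k+1)+1 := by ring
    have h2 : (2*(k+1)).factorial = (2*k+2) * ((2*k+1) * (2*k).factorial) := by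
      rw [h1, Nat.factorial_succ, Nat.factorial_succ]
    have h3 : (k+1).factorial = (k+1) * k.factorial := Nat.factorial_succ k
    have k1 : (k+2)*(2*k+1)^2 ≤ 4*(k+1)^3 := by nlinarith
    have key : (k+2) * ((2*k+2)*(2*k+1))^2 ≤ 16 * (k+1)^4 * (k+1) := by
      calc (k+2) * ((2*k+2)*(2*k+1))^2 = 4*(k+1)^2 * ((k+2)*(2*k+1)^2) := by ring
        _ ≤ 4*(k+1)^2 * (4*(k+1)^3) := Nat.mul_le_mul_left _ k1
        _ = 16 * (k+1)^4 * (k+1) := by ring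
    calc (k+1+1) * ((2*(k+1)).factorial)^2
        = (k+2) * ((2*k+2)*(2*k+1))^2 * ((2*k).factorial)^2 := by rw [h2]; ring
      _ ≤ (16 * (k+1)^4 * (k+1)) * ((2*k).factorial)^2 := by
          exact Nat.mul_le_mul_right _ key
      _ = 16 * (k+1)^4 * ((k+1) * ((2*k).factorial)^2) := by ring
      _ ≤ 16 * (k+1)^4 * ((4^k * (k.factorial)^2)^2) := Nat.mul_le_mul_left _ ih
      _ = (4^(k+1) * ((k+1).factorial)^2)^2 := by rw [h3]; ring

lemma sqrt_mul_factorial_le (k : ℕ) :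
    Real.sqrt ((k:ℝ)+1) * ((2*k).factorial : ℝ) ≤ 4^k * (k.factorial:ℝ)^2 := by
  have h := catalan_nat k
  have hr : ((k:ℝ)+1) * ((2*k).factorial:ℝ)^2 ≤ ((4:ℝ)^k * (k.factorial:ℝ)^2)^2 := by
    exact_mod_cast h
  have h1 : Real.sqrt ((k:ℝ)+1) * ((2*k).factorial : ℝ)
      = Real.sqrt (((k:ℝ)+1) * ((2*k).factorial:ℝ)^2) := by
    rw [Real.sqrt_mul (by positivity), Real.sqrt_sq (by positivity)]
  rw [h1]
  calc Real.sqrt (((k:ℝ)+1) * ((2*k).factorial:ℝ)^2)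
      ≤ Real.sqrt (((4:ℝ)^k * (k.factorial:ℝ)^2)^2) := Real.sqrt_le_sqrt hr
    _ = 4^k * (k.factorial:ℝ)^2 := Real.sqrt_sq (by positivity)

lemma summable_u {z : ℝ} (hz : 0 < z) :
    Summable (fun k : ℕ => z^(2*k) / ((2*k).factorial : ℝ)) := by
  apply Summable.of_nonneg_of_le (fun k => by positivity) (fun k => ?_)
    (Real.summable_pow_div_factorial (z^2))
  rw [pow_mul]
  gcongr
  omega

lemma tsum_u_le {z : ℝ} (hz : 0 < z) :
    (∑' k : ℕ, z^(2*k) / ((2*k).factorial : ℝ)) ≤ Real.exp z := by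
  apply Summable.tsum_le_of_sum_le (summable_u hz)
  intro s
  set N := s.sup id + 1 with hN
  have hsub : s ⊆ Finset.range N := by
    intro k hk
    simp only [Finset.mem_range, hN]
    exact Nat.lt_succ_of_le (Finset.le_sup (f := id) hk)
  calc ∑ k ∈ s, z^(2*k) / ((2*k).factorial : ℝ)
      ≤ ∑ k ∈ Finset.range N, z^(2*k) / ((2*k).factorial : ℝ) :=
        Finset.sum_le_sum_of_subset_of_nonneg hsub (fun k _ _ => by positivity)
    _ = ∑ m ∈ (Finset.range N).image (fun k => 2*k), z^m / (m.factorial : ℝ) := by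
        rw [Finset.sum_image (fun a _ b _ h => by omega)]
    _ ≤ ∑ m ∈ Finset.range (2*N), z^m / (m.factorial : ℝ) := by
        apply Finset.sum_le_sum_of_subset_of_nonneg
        · intro m hm
          simp only [Finset.mem_image, Finset.mem_range] at hm ⊢
          obtain ⟨k, hk, rfl⟩ := hm; omega
        · intro k _ _; positivity
    _ ≤ Real.exp z := Real.sum_le_exp_of_nonneg hz.le _

lemma log_nine_le : Real.log 9 ≤ 197/75 := by
  rw [Real.log_le_iff_le_exp (by norm_num)]
  have h1 : Real.exp (197/75) = Real.exp 1 * Real.exp 1 * Real.exp (47/75) := by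
    rw [← Real.exp_add, ← Real.exp_add]; norm_num
  have h2 : (47:ℝ)/75 + 1 ≤ Real.exp (47/75) := Real.add_one_le_exp _
  have h3 := Real.exp_one_gt_d9
  nlinarith [Real.exp_pos (47/75 : ℝ)]

lemma pow_rpow_le_exp {γ : ℝ} (hγ : 0 < γ) {z : ℝ} (hz : 0 < z) :
    z ^ γ ≤ ((⌈γ⌉₊.factorial : ℝ) * 100^(⌈γ⌉₊)) * Real.exp (z/100) := by
  set n := ⌈γ⌉₊ with hn
  have hfac1 : (1:ℝ) ≤ (n.factorial : ℝ) := by exact_mod_cast Nat.one_le_iff_ne_zero.2 n.factorial_ne_zero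
  rcases le_or_gt 1 z with hz1 | hz1
  · have h1 : z ^ γ ≤ z ^ (n:ℝ) :=
      Real.rpow_le_rpow_of_exponent_le hz1 (Nat.le_ceil γ)
    rw [Real.rpow_natCast] at h1
    have h2 : (z/100)^n / (n.factorial : ℝ) ≤ Real.exp (z/100) :=
      Real.pow_div_factorial_le_exp _ (by positivity) n
    have h3 : z^n = 100^n * (z/100)^n := by
      rw [← mul_pow]; congr 1; field_simp
    have : z ^ n ≤ (n.factorial : ℝ) * 100^n * Real.exp (z/100) := by
      rw [h3]
      have hfp : (0:ℝ) < (n.factorial : ℝ) := by positivity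
      calc (100:ℝ)^n * (z/100)^n ≤ 100^n * ((n.factorial : ℝ) * Real.exp (z/100)) := by
            apply mul_le_mul_of_nonneg_left _ (by positivity)
            rw [div_le_iff₀ hfp] at h2
            linarith [h2]
        _ = (n.factorial : ℝ) * 100^n * Real.exp (z/100) := by ring
    linarith
  · have h1 : z ^ γ ≤ 1 := Real.rpow_le_one hz.le hz1.le hγ.le
    have h2 : (1:ℝ) ≤ Real.exp (z/100) := Real.one_le_exp (by positivity)
    have h3 : (1:ℝ) ≤ (100:ℝ)^n := one_le_pow₀ (by norm_num)
    have h4 : (1:ℝ) ≤ (n.factorial:ℝ) * 100^n := by nlinarith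
    have h5 : (1:ℝ) ≤ (n.factorial:ℝ) * 100^n * Real.exp (z/100) := by nlinarith
    linarith

lemma sum_aux {γ : ℝ} (hγ : 0 < γ) :
    ∃ C : ℝ, 0 < C ∧ ∀ z : ℝ, 0 < z →
      (∑' k : ℕ, z^(2*k) / (((2*k).factorial : ℝ) * ((k:ℝ)+1) ^ γ)) ≤ C * Real.exp z / z ^ γ := by
  set n := ⌈γ⌉₊ with hn
  refine ⟨4^γ + (9/8) * (n.factorial : ℝ) * 100^n, by positivity, fun z hz => ?_⟩
  set u : ℕ → ℝ := fun k => z^(2*k) / ((2*k).factorial : ℝ) with hu_def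
  set T : ℕ → ℝ := fun k => z^(2*k) / (((2*k).factorial : ℝ) * ((k:ℝ)+1) ^ γ) with hT_def
  set v : ℕ → ℝ := fun k => if ((k:ℝ)+1) < z/4 then u k else 0 with hv_def
  have hunn : ∀ k, 0 ≤ u k := fun k => by simp only [hu_def]; positivity
  have hu : Summable u := summable_u hz
  have hone : ∀ k : ℕ, (1:ℝ) ≤ ((k:ℝ)+1) ^ γ := by
    intro k
    apply Real.one_le_rpow _ hγ.le
    have : (0:ℝ) ≤ (k:ℝ) := Nat.cast_nonneg k
    linarith
  have hT_le_u : ∀ k, T k ≤ u k := by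
    intro k
    simp only [hT_def, hu_def]
    rw [div_le_div_iff₀ (by positivity) (by positivity)]
    nlinarith [mul_le_mul_of_nonneg_left (hone k) (mul_nonneg (pow_nonneg hz.le (2*k))
      (show (0:ℝ) ≤ ((2*k).factorial : ℝ) by positivity))]
  have hTnn : ∀ k, 0 ≤ T k := fun k => by simp only [hT_def]; positivity
  have hT : Summable T := Summable.of_nonneg_of_le hTnn hT_le_u hu
  have hvnn : ∀ k, 0 ≤ v k := by
    intro k; simp only [hv_def]
    split
    · exact hunn k
    · exact le_rfl
  have hv_le_u : ∀ k, v k ≤ u k := by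
    intro k; simp only [hv_def]
    split
    · exact le_rfl
    · exact hunn k
  have hv : Summable v := Summable.of_nonneg_of_le hvnn hv_le_u hu
  -- splitting inequality
  have hsplit : ∀ k, T k ≤ 4^γ / z^γ * u k + v k := by
    intro k
    by_cases h : ((k:ℝ)+1) < z/4
    · have : T k ≤ v k := by simp only [hv_def, if_pos h]; exact hT_le_u k
      have h0 : 0 ≤ 4^γ / z^γ * u k := by positivity
      linarith
    · simp only [hv_def, if_neg h, add_zero]
      push_neg at h
      have hzq : (0:ℝ) < (z/4) ^ γ := Real.rpow_pos_of_pos (by positivity) _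
      have hkq : (z/4) ^ γ ≤ ((k:ℝ)+1) ^ γ :=
        Real.rpow_le_rpow (by positivity) h hγ.le
      have : T k ≤ z^(2*k) / (((2*k).factorial : ℝ) * (z/4) ^ γ) := by
        simp only [hT_def]
        gcongr
      calc T k ≤ z^(2*k) / (((2*k).factorial : ℝ) * (z/4) ^ γ) := this
        _ = 4^γ / z^γ * u k := by
            rw [Real.div_rpow hz.le (by norm_num : (0:ℝ) ≤ 4)]
            simp only [hu_def]
            field_simp
  -- bound on tsum v
  have htv : ∑' k, v k ≤ (9/8) * Real.exp ((99/100) * z) := by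
    set N := ⌈z/4⌉₊ with hN
    have hveq : ∑' k, v k = ∑ k ∈ Finset.range N, v k := by
      apply tsum_eq_sum
      intro k hk
      simp only [Finset.mem_range, not_lt] at hk
      have : z/4 ≤ (k:ℝ) + 1 := by
        calc z/4 ≤ (N:ℝ) := Nat.le_ceil _
          _ ≤ (k:ℝ) := by exact_mod_cast hk
          _ ≤ (k:ℝ) + 1 := by linarith
      simp only [hv_def, if_neg (not_lt.2 this)]
    rw [hveq]
    have hterm : ∀ k, v k ≤ Real.exp (z/3) * 9^k := by
      intro k
      have h1 : u k ≤ Real.exp (z/3) * 9^k := by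
        have h30 : (3:ℝ)^(2*k) = 9^k := by rw [pow_mul]; norm_num
        have h3 : z^(2*k) = 9^k * (z/3)^(2*k) := by
          rw [div_pow, h30]
          have h9 : ((9:ℝ)^k) ≠ 0 := by positivity
          field_simp
        simp only [hu_def]
        rw [h3]
        have h4 : (z/3)^(2*k) / ((2*k).factorial : ℝ) ≤ Real.exp (z/3) :=
          Real.pow_div_factorial_le_exp _ (by positivity) _
        calc 9^k * (z/3)^(2*k) / ((2*k).factorial : ℝ)
            = 9^k * ((z/3)^(2*k) / ((2*k).factorial : ℝ)) := by ring
          _ ≤ 9^k * Real.exp (z/3) := by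
              apply mul_le_mul_of_nonneg_left h4 (by positivity)
          _ = Real.exp (z/3) * 9^k := by ring
      exact le_trans (hv_le_u k) h1
    calc ∑ k ∈ Finset.range N, v k ≤ ∑ k ∈ Finset.range N, Real.exp (z/3) * 9^k :=
          Finset.sum_le_sum (fun k _ => hterm k)
      _ = Real.exp (z/3) * ((9^N - 1)/8) := by
          rw [← Finset.mul_sum, geom_sum_eq (by norm_num : (9:ℝ) ≠ 1)]
          norm_num
      _ ≤ Real.exp (z/3) * (9^N / 8) := by
          apply mul_le_mul_of_nonneg_left _ (Real.exp_pos _).le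
          have : (0:ℝ) < 9^N := by positivity
          linarith
      _ ≤ (9/8) * Real.exp ((99/100) * z) := by
          have h9N : (9:ℝ)^N ≤ 9 * Real.exp ((Real.log 9 / 4) * z) := by
            have hlog9 : (0:ℝ) ≤ Real.log 9 := Real.log_nonneg (by norm_num)
            have e1 : (9:ℝ)^N = Real.exp (N * Real.log 9) := by
              rw [← Real.log_pow, Real.exp_log (by positivity)]
            have e2 : (N:ℝ) ≤ z/4 + 1 := (Nat.ceil_lt_add_one (by positivity)).le
            rw [e1]
            calc Real.exp (N * Real.log 9) ≤ Real.exp ((z/4+1) * Real.log 9) := by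
                  apply Real.exp_le_exp.2
                  exact mul_le_mul_of_nonneg_right e2 hlog9
              _ = Real.exp (Real.log 9) * Real.exp ((Real.log 9 / 4) * z) := by
                  rw [← Real.exp_add]; ring_nf
              _ = 9 * Real.exp ((Real.log 9 / 4) * z) := by
                  rw [Real.exp_log (by norm_num : (0:ℝ) < 9)]
          have hcomb : Real.exp (z/3) * Real.exp ((Real.log 9 / 4) * z)
              ≤ Real.exp ((99/100) * z) := by
            rw [← Real.exp_add]
            apply Real.exp_le_exp.2
            have := log_nine_le
            nlinarith
          calc Real.exp (z/3) * (9^N/8) ≤ Real.exp (z/3) * (9 * Real.exp ((Real.log 9/4)*z) / 8) := by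
                apply mul_le_mul_of_nonneg_left _ (Real.exp_pos _).le
                linarith
            _ = (9/8) * (Real.exp (z/3) * Real.exp ((Real.log 9/4)*z)) := by ring
            _ ≤ (9/8) * Real.exp ((99/100)*z) := by
                apply mul_le_mul_of_nonneg_left hcomb (by norm_num)
  -- assemble
  have hzg : (0:ℝ) < z ^ γ := Real.rpow_pos_of_pos hz _
  have hstep : ∑' k, T k ≤ 4^γ / z^γ * (∑' k, u k) + ∑' k, v k := by
    calc ∑' k, T k ≤ ∑' k, (4^γ / z^γ * u k + v k) :=
          Summable.tsum_le_tsum hsplit hT ((hu.mul_left _).add hv)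
      _ = 4^γ / z^γ * (∑' k, u k) + ∑' k, v k := by
          rw [Summable.tsum_add (hu.mul_left _) hv, tsum_mul_left]
  have hfin : (9/8) * Real.exp ((99/100) * z)
      ≤ (9/8) * (n.factorial : ℝ) * 100^n * Real.exp z / z^γ := by
    have h1 : z ^ γ ≤ ((n.factorial : ℝ) * 100^n) * Real.exp (z/100) :=
      pow_rpow_le_exp hγ hz
    have h2 : Real.exp ((99/100)*z) * Real.exp (z/100) = Real.exp z := by
      rw [← Real.exp_add]; ring_nf
    rw [le_div_iff₀ hzg]
    calc (9/8) * Real.exp ((99/100) * z) * z^γ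
        ≤ (9/8) * Real.exp ((99/100) * z) * (((n.factorial : ℝ) * 100^n) * Real.exp (z/100)) := by
          apply mul_le_mul_of_nonneg_left h1 (by positivity)
      _ = (9/8) * (n.factorial : ℝ) * 100^n * (Real.exp ((99/100)*z) * Real.exp (z/100)) := by ring
      _ = (9/8) * (n.factorial : ℝ) * 100^n * Real.exp z := by rw [h2]
  calc ∑' k, T k ≤ 4^γ / z^γ * (∑' k, u k) + ∑' k, v k := hstep
    _ ≤ 4^γ / z^γ * Real.exp z + (9/8) * Real.exp ((99/100) * z) := by
        have := tsum_u_le hz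
        have h4 : (0:ℝ) ≤ 4^γ / z^γ := by positivity
        have := htv
        nlinarith [mul_le_mul_of_nonneg_left (tsum_u_le hz) h4]
    _ ≤ 4^γ / z^γ * Real.exp z + (9/8) * (n.factorial : ℝ) * 100^n * Real.exp z / z^γ := by
        linarith [hfin]
    _ = (4^γ + (9/8) * (n.factorial : ℝ) * 100^n) * Real.exp z / z^γ := by
        field_simp

lemma summable_T {z γ : ℝ} (hz : 0 < z) (hγ : 0 ≤ γ) :
    Summable (fun k : ℕ => z^(2*k) / (((2*k).factorial:ℝ) * ((k:ℝ)+1)^γ)) := by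
  apply Summable.of_nonneg_of_le (fun k => by positivity) (fun k => ?_) (summable_u hz)
  have hone : (1:ℝ) ≤ ((k:ℝ)+1) ^ γ := by
    apply Real.one_le_rpow _ hγ
    have : (0:ℝ) ≤ (k:ℝ) := Nat.cast_nonneg k
    linarith
  rw [div_le_div_iff₀ (by positivity) (by positivity)]
  nlinarith [mul_le_mul_of_nonneg_left hone (mul_nonneg (pow_nonneg hz.le (2*k))
    (show (0:ℝ) ≤ ((2*k).factorial : ℝ) by positivity))]

lemma besselI_bound {ν : ℝ} (hν : -(1/2) < ν) :
    ∃ C : ℝ, 0 < C ∧ ∀ z : ℝ, 0 < z → besselI ν z ≤ C * Real.exp z / Real.sqrt z := by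
  have hγ : 0 < ν + 1/2 := by linarith
  obtain ⟨C₀, hC₀, hS⟩ := sum_aux hγ
  refine ⟨2 * (2:ℝ)^(-ν) * C₀, by positivity, fun z hz => ?_⟩
  have hz2 : 0 < z/2 := by positivity
  have hΓpos : ∀ k : ℕ, 0 < Real.Gamma ((k:ℝ)+ν+1) := by
    intro k
    apply Real.Gamma_pos_of_pos
    have : (0:ℝ) ≤ (k:ℝ) := Nat.cast_nonneg k
    linarith
  have hk1 : ∀ k : ℕ, (0:ℝ) < (k:ℝ)+1 := fun k => by positivity
  -- key denominator inequality
  have key : ∀ k : ℕ, ((2*k).factorial : ℝ) * ((k:ℝ)+1)^(ν+1/2)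
      ≤ 2 * 4^k * ((k.factorial:ℝ) * Real.Gamma ((k:ℝ)+ν+1)) := by
    intro k
    have g1 := gamma_lower hν k
    have g2 := sqrt_mul_factorial_le k
    have e2 : ((k:ℝ)+1)^(ν+1/2) = ((k:ℝ)+1)^ν * Real.sqrt ((k:ℝ)+1) := by
      rw [Real.sqrt_eq_rpow, ← Real.rpow_add (hk1 k)]
    have hrnn : (0:ℝ) ≤ ((k:ℝ)+1)^ν := (Real.rpow_pos_of_pos (hk1 k) ν).le
    have hfnn : (0:ℝ) ≤ (k.factorial : ℝ) := by positivity
    calc ((2*k).factorial : ℝ) * ((k:ℝ)+1)^(ν+1/2)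
        = ((k:ℝ)+1)^ν * (Real.sqrt ((k:ℝ)+1) * ((2*k).factorial : ℝ)) := by rw [e2]; ring
      _ ≤ ((k:ℝ)+1)^ν * (4^k * (k.factorial:ℝ)^2) := mul_le_mul_of_nonneg_left g2 hrnn
      _ = 2 * 4^k * ((k.factorial:ℝ) * (1/2 * (k.factorial:ℝ) * ((k:ℝ)+1)^ν)) := by ring
      _ ≤ 2 * 4^k * ((k.factorial:ℝ) * Real.Gamma ((k:ℝ)+ν+1)) := by
          apply mul_le_mul_of_nonneg_left (mul_le_mul_of_nonneg_left g1 hfnn) (by positivity)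
  have hpow2 : ∀ k : ℕ, (z/2)^(2*k) * 4^k = z^(2*k) := by
    intro k
    rw [show (4:ℝ)^k = 2^(2*k) from by rw [pow_mul]; norm_num, ← mul_pow]
    congr 1
    field_simp
  -- termwise bound
  have hterm : ∀ k : ℕ, (z / 2) ^ (2 * (k : ℝ) + ν) / ((k.factorial : ℝ) * Real.Gamma ((k:ℝ) + ν + 1))
      ≤ 2*(z/2)^ν * (z^(2*k) / (((2*k).factorial:ℝ) * ((k:ℝ)+1)^(ν+1/2))) := by
    intro k
    have e1 : (z/2)^(2*(k:ℝ)+ν) = (z/2)^(2*k : ℕ) * (z/2)^ν := by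
      rw [show 2*(k:ℝ)+ν = ((2*k:ℕ):ℝ) + ν by push_cast; ring, Real.rpow_add hz2,
        Real.rpow_natCast]
    rw [e1, ← mul_div_assoc, div_le_div_iff₀ (mul_pos (by positivity) (hΓpos k)) (by positivity)]
    have h6 := mul_le_mul_of_nonneg_left (key k)
      (show (0:ℝ) ≤ (z/2)^(2*k) * (z/2)^ν by positivity)
    calc (z/2)^(2*k : ℕ) * (z/2)^ν * (((2*k).factorial:ℝ) * ((k:ℝ)+1)^(ν+1/2))
        ≤ (z/2)^(2*k) * (z/2)^ν * (2 * 4^k * ((k.factorial:ℝ) * Real.Gamma ((k:ℝ)+ν+1))) := h6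
      _ = 2*(z/2)^ν * ((z/2)^(2*k) * 4^k) * ((k.factorial:ℝ) * Real.Gamma ((k:ℝ)+ν+1)) := by
          ring
      _ = 2*(z/2)^ν * z^(2*k) * ((k.factorial:ℝ) * Real.Gamma ((k:ℝ)+ν+1)) := by
          rw [hpow2 k]
  -- summabilities
  have hTs : Summable (fun k : ℕ => z^(2*k) / (((2*k).factorial:ℝ) * ((k:ℝ)+1)^(ν+1/2))) :=
    summable_T hz hγ.le
  have hMaj : Summable (fun k : ℕ =>
      2*(z/2)^ν * (z^(2*k) / (((2*k).factorial:ℝ) * ((k:ℝ)+1)^(ν+1/2)))) := hTs.mul_left _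
  have hAnn : ∀ k : ℕ, 0 ≤ (z / 2) ^ (2 * (k : ℝ) + ν) / ((k.factorial : ℝ) * Real.Gamma ((k:ℝ) + ν + 1)) := by
    intro k
    apply div_nonneg (Real.rpow_nonneg hz2.le _) (mul_nonneg (by positivity) (hΓpos k).le)
  have hAs : Summable (fun k : ℕ =>
      (z / 2) ^ (2 * (k : ℝ) + ν) / ((k.factorial : ℝ) * Real.Gamma ((k:ℝ) + ν + 1))) :=
    Summable.of_nonneg_of_le hAnn hterm hMaj
  -- sum up
  have hsum : besselI ν z ≤ 2*(z/2)^ν *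
      (∑' k : ℕ, z^(2*k) / (((2*k).factorial:ℝ) * ((k:ℝ)+1)^(ν+1/2))) := by
    rw [besselI, ← tsum_mul_left]
    exact Summable.tsum_le_tsum hterm hAs hMaj
  have hS' := hS z hz
  have hc : (0:ℝ) ≤ 2*(z/2)^ν := by positivity
  calc besselI ν z ≤ 2*(z/2)^ν *
        (∑' k : ℕ, z^(2*k) / (((2*k).factorial:ℝ) * ((k:ℝ)+1)^(ν+1/2))) := hsum
    _ ≤ 2*(z/2)^ν * (C₀ * Real.exp z / z ^ (ν+1/2)) := mul_le_mul_of_nonneg_left hS' hc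
    _ = 2 * (2:ℝ)^(-ν) * C₀ * Real.exp z / Real.sqrt z := by
        rw [Real.div_rpow hz.le (by norm_num : (0:ℝ) ≤ 2),
          Real.rpow_add hz, Real.rpow_neg (by norm_num : (0:ℝ) ≤ 2),
          show z ^ (1/2 : ℝ) = Real.sqrt z from (Real.sqrt_eq_rpow z).symm]
        have h1 : (0:ℝ) < z ^ ν := Real.rpow_pos_of_pos hz ν
        have h2 : (0:ℝ) < (2:ℝ) ^ ν := Real.rpow_pos_of_pos (by norm_num) ν
        have h3 : (0:ℝ) < Real.sqrt z := Real.sqrt_pos.2 hz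
        field_simp

/-- The Bessel heat kernel is dominated by the Gauss–Weierstrass kernel. -/
theorem heat_kernel_gaussian_bound (lam : ℝ) (hlam : 0 < lam) :
    ∃ C : ℝ, 0 < C ∧ ∀ x y t : ℝ, 0 < x → 0 < y → 0 < t →
      besselHeatKernel lam t x y ≤
        C * ((4 * Real.pi * t) ^ (-(1 : ℝ) / 2) * Real.exp (-(x - y) ^ 2 / (4 * t))) := by
  have hν : -(1/2:ℝ) < lam - 1/2 := by linarith
  obtain ⟨B, hB, hI⟩ := besselI_bound hν
  have hπ : (0:ℝ) < Real.pi := Real.pi_pos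
  refine ⟨B * Real.sqrt (2*Real.pi), by positivity, fun x y t hx hy ht => ?_⟩
  set z := x*y/(2*t) with hzdef
  have hz : 0 < z := by positivity
  have hxy : 0 < x*y := by positivity
  have h2t : 0 < 2*t := by positivity
  have h1 : 0 < Real.sqrt (x*y) := Real.sqrt_pos.2 hxy
  have h2 : 0 < Real.sqrt (2*t) := Real.sqrt_pos.2 h2t
  have h3 : Real.sqrt (2*t) * Real.sqrt (2*t) = 2*t := Real.mul_self_sqrt h2t.le
  have hsz : Real.sqrt z = Real.sqrt (x*y) / Real.sqrt (2*t) := by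
    rw [hzdef, Real.sqrt_div hxy.le]
  have hexp : Real.exp (-(x^2+y^2)/(4*t)) = Real.exp (-(x-y)^2/(4*t)) * Real.exp (-z) := by
    rw [← Real.exp_add]
    congr 1
    rw [hzdef]
    field_simp
    ring
  have hIb := hI z hz
  have hE1 : (0:ℝ) < Real.exp (-(x-y)^2/(4*t)) := Real.exp_pos _
  have hE2 : (0:ℝ) < Real.exp (-z) := Real.exp_pos _
  have hA : (0:ℝ) ≤ Real.sqrt (x*y)/(2*t) := by positivity
  have key : Real.sqrt (x*y)/(2*t) * (B * Real.exp z / Real.sqrt z) *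
        (Real.exp (-(x-y)^2/(4*t)) * Real.exp (-z))
      = B * Real.exp (-(x-y)^2/(4*t)) / Real.sqrt (2*t) := by
    rw [hsz, Real.exp_neg]
    have h4 := (Real.exp_pos z).ne'
    set s2 := Real.sqrt (2*t) with hs2
    set sxy := Real.sqrt (x*y) with hsxy
    field_simp
    linear_combination h3
  have hr : B * Real.sqrt (2*Real.pi) * ((4*Real.pi*t) ^ (-(1:ℝ)/2) * Real.exp (-(x-y)^2/(4*t)))
      = B * Real.exp (-(x-y)^2/(4*t)) / Real.sqrt (2*t) := by
    have hq : (4*Real.pi*t) ^ (-(1:ℝ)/2) = (Real.sqrt (2*Real.pi) * Real.sqrt (2*t))⁻¹ := by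
      rw [show (4*Real.pi*t) = (2*Real.pi)*(2*t) by ring, ← Real.sqrt_mul (by positivity) _,
        show (-(1:ℝ)/2) = -(1/2:ℝ) by norm_num, Real.rpow_neg (by positivity),
        ← Real.sqrt_eq_rpow]
    rw [hq]
    have h5 : 0 < Real.sqrt (2*Real.pi) := Real.sqrt_pos.2 (by positivity)
    field_simp
  rw [besselHeatKernel, hexp, hr]
  calc Real.sqrt (x*y)/(2*t) * besselI (lam - 1/2) z *
        (Real.exp (-(x-y)^2/(4*t)) * Real.exp (-z))
      ≤ Real.sqrt (x*y)/(2*t) * (B * Real.exp z / Real.sqrt z) *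
        (Real.exp (-(x-y)^2/(4*t)) * Real.exp (-z)) := by
        apply mul_le_mul_of_nonneg_right (mul_le_mul_of_nonneg_left hIb hA)
        positivity
    _ = B * Real.exp (-(x-y)^2/(4*t)) / Real.sqrt (2*t) := key
end
end

section
/- Let 0 < α < 1 and let f : ℝ₊ → ℝ be continuous and locally integrable. Then f ∈ C^α_+ if and only if there exists a constant C > 0 such that ∫_I |f(y) − f_I| dy ≤ C |I|^{1+α} for every bounded interval I ⊂ ℝ₊ (where f_I = (1/|I|) ∫_I f(y) dy) and ∫₀^b |f(y)| dy ≤ C b^{1+α} for every b > 0. Moreover, ‖f‖_{C^α_+} is comparable (with constants depending only on α) to the least such constant C. -/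
open Real MeasureTheory Set Filter

noncomputable section

section CampanatoAux

private lemma pow_rpow_comm {x : ℝ} (hx : 0 ≤ x) (p : ℝ) (k : ℕ) :
    (x ^ k) ^ p = (x ^ p) ^ k := by
  rw [← Real.rpow_natCast x k, ← Real.rpow_mul hx, mul_comm, Real.rpow_mul hx, Real.rpow_natCast]

private lemma setIntegral_const_Ioo (a b c : ℝ) (hab : a ≤ b) :
    (∫ _ in Set.Ioo a b, c) = (b - a) * c := by
  rw [setIntegral_const, Real.volume_real_Ioo_of_le hab, smul_eq_mul]

private lemma integrableOn_const_Ioo (a b c : ℝ) :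
    IntegrableOn (fun _ : ℝ => c) (Set.Ioo a b) := by
  refine integrableOn_const ?_
  rw [Real.volume_Ioo]; exact ENNReal.ofReal_ne_top

private lemma abs_avg_sub_le {f : ℝ → ℝ} {a b : ℝ} (hab : a < b)
    (hf : IntegrableOn f (Set.Ioo a b)) (c : ℝ) :
    |(b - a)⁻¹ * (∫ z in Set.Ioo a b, f z) - c| ≤ (b - a)⁻¹ * ∫ z in Set.Ioo a b, |f z - c| := by
  have hba : (0:ℝ) < b - a := by linarith
  have h1 : (b - a)⁻¹ * (∫ z in Set.Ioo a b, f z) - c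
      = (b - a)⁻¹ * ∫ z in Set.Ioo a b, (f z - c) := by
    rw [integral_sub hf (integrableOn_const_Ioo a b c), setIntegral_const_Ioo a b c hab.le]
    field_simp
  rw [h1, abs_mul, abs_inv, abs_of_pos hba]
  refine mul_le_mul_of_nonneg_left ?_ (inv_nonneg.2 hba.le)
  simpa [Real.norm_eq_abs] using
    norm_integral_le_integral_norm (μ := volume.restrict (Set.Ioo a b)) (fun z => f z - c)

private lemma key_endpoint {f : ℝ → ℝ} {α C : ℝ}
    (hα0 : 0 < α) (hC : 0 ≤ C)
    (hf_int : ∀ b : ℝ, 0 < b → IntegrableOn f (Set.Ioo 0 b))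
    (hosc : ∀ a b : ℝ, 0 ≤ a → a < b →
      (∫ y in Set.Ioo a b, |f y - (b - a)⁻¹ * ∫ z in Set.Ioo a b, f z|) ≤ C * (b - a) ^ (1 + α))
    (hcont : ContinuousOn f (Set.Ioi 0))
    (p q : ℕ → ℝ) (hp0 : ∀ n, 0 ≤ p n) (hlt : ∀ n, p n < q n)
    (ℓ : ℝ) (hlen : ∀ n, q n - p n = ℓ * (1/2 : ℝ) ^ n)
    (hnest : ∀ n, Set.Ioo (p (n+1)) (q (n+1)) ⊆ Set.Ioo (p n) (q n))
    (x : ℝ) (hx : 0 < x)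
    (hclose : ∀ n, ∀ z ∈ Set.Ioo (p n) (q n), |z - x| ≤ ℓ * (1/2 : ℝ) ^ n) :
    |f x - (q 0 - p 0)⁻¹ * ∫ z in Set.Ioo (p 0) (q 0), f z|
      ≤ 2 * C * ℓ ^ α / (1 - (1/2 : ℝ) ^ α) := by
  have hℓ : 0 < ℓ := by
    have := hlt 0; have h0 := hlen 0; simp at h0; linarith
  set r : ℝ := (1/2 : ℝ) ^ α with hrdef
  have hr0 : 0 < r := Real.rpow_pos_of_pos (by norm_num) α
  have hr1 : r < 1 := Real.rpow_lt_one (by norm_num) (by norm_num) hα0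
  have hint : ∀ n, IntegrableOn f (Set.Ioo (p n) (q n)) := by
    intro n
    refine (hf_int (q n) (lt_of_le_of_lt (hp0 n) (hlt n))).mono_set ?_
    exact fun z hz => ⟨lt_of_le_of_lt (hp0 n) hz.1, hz.2⟩
  set u : ℕ → ℝ := fun n => (q n - p n)⁻¹ * ∫ z in Set.Ioo (p n) (q n), f z with hudef
  set M : ℝ := 2 * C * ℓ ^ α with hMdef
  have hM0 : 0 ≤ M := by positivity
  -- step estimate
  have step : ∀ n, |u (n+1) - u n| ≤ M * r ^ n := by
    intro n
    have h1 : |u (n+1) - u n|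
        ≤ (q (n+1) - p (n+1))⁻¹ * ∫ z in Set.Ioo (p (n+1)) (q (n+1)), |f z - u n| :=
      abs_avg_sub_le (hlt (n+1)) (hint (n+1)) (u n)
    have h2 : (∫ z in Set.Ioo (p (n+1)) (q (n+1)), |f z - u n|)
        ≤ ∫ z in Set.Ioo (p n) (q n), |f z - u n| := by
      refine setIntegral_mono_set ((hint n).sub (integrableOn_const_Ioo _ _ _)).abs
        (ae_of_all _ fun z => abs_nonneg _) (HasSubset.Subset.eventuallyLE (hnest n))
    have h3 : (∫ z in Set.Ioo (p n) (q n), |f z - u n|) ≤ C * (q n - p n) ^ (1 + α) :=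
      hosc (p n) (q n) (hp0 n) (hlt n)
    have h4 : (0:ℝ) < (q (n+1) - p (n+1))⁻¹ := by
      rw [inv_pos]; linarith [hlt (n+1)]
    have h5 : |u (n+1) - u n| ≤ (q (n+1) - p (n+1))⁻¹ * (C * (q n - p n) ^ (1 + α)) :=
      h1.trans (mul_le_mul_of_nonneg_left (h2.trans h3) h4.le)
    refine h5.trans_eq ?_
    rw [hlen, hlen]
    have hpow : (0:ℝ) < ℓ * (1/2 : ℝ) ^ n := by positivity
    rw [Real.rpow_add hpow, Real.rpow_one,
      Real.mul_rpow hℓ.le (by positivity : (0:ℝ) ≤ (1/2 : ℝ) ^ n),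
      pow_rpow_comm (by norm_num : (0:ℝ) ≤ 1/2) α n, hMdef, hrdef, pow_succ]
    field_simp
  -- telescoping
  have tele : ∀ n, |u n - u 0| ≤ M * ∑ k ∈ Finset.range n, r ^ k := by
    intro n
    induction n with
    | zero => simp
    | succ n ih =>
      have := step n
      calc |u (n+1) - u 0| ≤ |u (n+1) - u n| + |u n - u 0| := abs_sub_le _ _ _
        _ ≤ M * r ^ n + M * ∑ k ∈ Finset.range n, r ^ k := add_le_add (step n) ih
        _ = M * ∑ k ∈ Finset.range (n+1), r ^ k := by
            rw [Finset.sum_range_succ]; ring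
  have geom : ∀ n, (∑ k ∈ Finset.range n, r ^ k) ≤ (1 - r)⁻¹ := by
    intro n
    refine (Summable.sum_le_tsum (Finset.range n) (fun i _ => pow_nonneg hr0.le i)
      (summable_geometric_of_lt_one hr0.le hr1)).trans_eq
      (tsum_geometric_of_lt_one hr0.le hr1)
  have tele' : ∀ n, |u n - u 0| ≤ M * (1 - r)⁻¹ := fun n =>
    (tele n).trans (mul_le_mul_of_nonneg_left (geom n) hM0)
  -- convergence to f x
  have conv : ∀ ε : ℝ, 0 < ε → ∃ n, |u n - f x| ≤ ε := by
    intro ε hε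
    have hcx : ContinuousWithinAt f (Set.Ioi 0) x := hcont x hx
    rw [Metric.continuousWithinAt_iff] at hcx
    obtain ⟨δ, hδ, hδ'⟩ := hcx ε hε
    obtain ⟨n, hn⟩ := exists_pow_lt_of_lt_one (div_pos hδ hℓ) (by norm_num : (1/2:ℝ) < 1)
    have hsmall : ℓ * (1/2 : ℝ) ^ n < δ := by
      rw [mul_comm]; exact (lt_div_iff₀ hℓ).1 hn
    refine ⟨n, ?_⟩
    have h1 : |u n - f x| ≤ (q n - p n)⁻¹ * ∫ z in Set.Ioo (p n) (q n), |f z - f x| :=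
      abs_avg_sub_le (hlt n) (hint n) (f x)
    have h2 : (∫ z in Set.Ioo (p n) (q n), |f z - f x|)
        ≤ ∫ _ in Set.Ioo (p n) (q n), ε := by
      refine setIntegral_mono_on ((hint n).sub (integrableOn_const_Ioo _ _ _)).abs
        (integrableOn_const_Ioo _ _ _) measurableSet_Ioo ?_
      intro z hz
      have hz0 : z ∈ Set.Ioi (0:ℝ) := lt_of_le_of_lt (hp0 n) hz.1
      have := hδ' hz0 (by rw [Real.dist_eq]; exact lt_of_le_of_lt (hclose n z hz) hsmall)
      rw [Real.dist_eq] at this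
      exact this.le
    rw [setIntegral_const_Ioo _ _ _ (hlt n).le] at h2
    have h4 : (0:ℝ) < q n - p n := by linarith [hlt n]
    calc |u n - f x| ≤ (q n - p n)⁻¹ * ((q n - p n) * ε) :=
          h1.trans (mul_le_mul_of_nonneg_left h2 (inv_nonneg.2 h4.le))
      _ = ε := by field_simp
  -- conclusion
  have final : ∀ ε : ℝ, 0 < ε → |f x - u 0| ≤ M * (1 - r)⁻¹ + ε := by
    intro ε hε
    obtain ⟨n, hn⟩ := conv ε hε
    calc |f x - u 0| ≤ |f x - u n| + |u n - u 0| := abs_sub_le _ _ _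
      _ ≤ ε + M * (1 - r)⁻¹ := add_le_add (by rw [abs_sub_comm]; exact hn) (tele' n)
      _ = M * (1 - r)⁻¹ + ε := by ring
  have hfinal : |f x - u 0| ≤ M * (1 - r)⁻¹ := by
    by_contra h
    push_neg at h
    have := final ((|f x - u 0| - M * (1 - r)⁻¹) / 2) (by linarith)
    linarith
  calc |f x - u 0| ≤ M * (1 - r)⁻¹ := hfinal
    _ = 2 * C * ℓ ^ α / (1 - r) := by rw [hMdef]; ring

private lemma holderRatioSet_nonempty (α : ℝ) (f : ℝ → ℝ) :
    (holderRatioSet α f).Nonempty :=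
  ⟨|f 1 - f 2| / |(1:ℝ) - 2| ^ α, 1, 2, one_pos, two_pos, by norm_num, rfl⟩

private lemma growthRatioSet_nonempty (α : ℝ) (f : ℝ → ℝ) :
    (growthRatioSet α f).Nonempty :=
  ⟨|f 1| / (1:ℝ) ^ α, 1, one_pos, rfl⟩

end CampanatoAux

/-- Campanato-type characterization of `C^α_+`. -/
theorem campanato_characterization (α : ℝ) (hα0 : 0 < α) (hα1 : α < 1) :
    ∃ c₁ c₂ : ℝ, 0 < c₁ ∧ 0 < c₂ ∧
      ∀ f : ℝ → ℝ, ContinuousOn f (Set.Ioi 0) → LocallyIntegrableOn f (Set.Ioi 0) →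
        (MemHolderPlus α f →
          (∀ a b : ℝ, 0 ≤ a → a < b →
            (∫⁻ y in Set.Ioo a b,
                (‖f y - (b - a)⁻¹ * ∫ z in Set.Ioo a b, f z‖₊ : ENNReal)) ≤
              ENNReal.ofReal (c₁ * holderPlusNorm α f * (b - a) ^ (1 + α))) ∧
          (∀ b : ℝ, 0 < b →
            (∫⁻ y in Set.Ioo (0 : ℝ) b, (‖f y‖₊ : ENNReal)) ≤
              ENNReal.ofReal (c₁ * holderPlusNorm α f * b ^ (1 + α)))) ∧
        (∀ C : ℝ, 0 < C →
          (∀ a b : ℝ, 0 ≤ a → a < b →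
            (∫⁻ y in Set.Ioo a b,
                (‖f y - (b - a)⁻¹ * ∫ z in Set.Ioo a b, f z‖₊ : ENNReal)) ≤
              ENNReal.ofReal (C * (b - a) ^ (1 + α))) →
          (∀ b : ℝ, 0 < b →
            (∫⁻ y in Set.Ioo (0 : ℝ) b, (‖f y‖₊ : ENNReal)) ≤
              ENNReal.ofReal (C * b ^ (1 + α))) →
          MemHolderPlus α f ∧ holderPlusNorm α f ≤ c₂ * C) := by
  have hr0 : (0:ℝ) < (1/2 : ℝ) ^ α := Real.rpow_pos_of_pos (by norm_num) α
  have hr1 : (1/2 : ℝ) ^ α < 1 := Real.rpow_lt_one (by norm_num) (by norm_num) hα0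
  refine ⟨1, 7 / (1 - (1/2 : ℝ) ^ α), one_pos, div_pos (by norm_num) (by linarith), ?_⟩
  intro f hcont hloc
  constructor
  · -- forward direction
    rintro ⟨-, hbH, hbG⟩
    set H := sSup (holderRatioSet α f) with hHdef
    set G := sSup (growthRatioSet α f) with hGdef
    have hH0 : 0 ≤ H :=
      le_trans (div_nonneg (abs_nonneg _) (Real.rpow_nonneg (abs_nonneg _) _))
        (le_csSup hbH ⟨1, 2, one_pos, two_pos, by norm_num, rfl⟩)
    have hG0 : 0 ≤ G :=
      le_trans (div_nonneg (abs_nonneg _) (Real.rpow_nonneg (by norm_num) _))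
        (le_csSup hbG ⟨1, one_pos, rfl⟩)
    have hHolder : ∀ x y : ℝ, 0 < x → 0 < y → |f x - f y| ≤ H * |x - y| ^ α := by
      intro x y hx hy
      by_cases hxy : x = y
      · subst hxy; simp; positivity
      · have hmem : |f x - f y| / |x - y| ^ α ∈ holderRatioSet α f := ⟨x, y, hx, hy, hxy, rfl⟩
        have hle := le_csSup hbH hmem
        have hpos : (0:ℝ) < |x - y| ^ α :=
          Real.rpow_pos_of_pos (abs_pos.2 (sub_ne_zero.2 hxy)) α
        calc |f x - f y| = |f x - f y| / |x - y| ^ α * |x - y| ^ α := by field_simp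
          _ ≤ H * |x - y| ^ α := mul_le_mul_of_nonneg_right hle hpos.le
    have hGrowth : ∀ x : ℝ, 0 < x → |f x| ≤ G * x ^ α := by
      intro x hx
      have hmem : |f x| / x ^ α ∈ growthRatioSet α f := ⟨x, hx, rfl⟩
      have hle := le_csSup hbG hmem
      have hpos : (0:ℝ) < x ^ α := Real.rpow_pos_of_pos hx α
      calc |f x| = |f x| / x ^ α * x ^ α := by field_simp
        _ ≤ G * x ^ α := mul_le_mul_of_nonneg_right hle hpos.le
    have hint : ∀ a b : ℝ, 0 ≤ a → a < b → IntegrableOn f (Set.Ioo a b) := by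
      intro a b ha hab
      have hsub : Set.Ioo a b ⊆ Set.Ioi 0 := fun z hz => lt_of_le_of_lt ha hz.1
      refine ⟨(hcont.mono hsub).aestronglyMeasurable measurableSet_Ioo, ?_⟩
      refine HasFiniteIntegral.restrict_of_bounded (C := G * b ^ α) ?_ ?_
      · rw [Real.volume_Ioo]; exact ENNReal.ofReal_lt_top
      · refine (ae_restrict_iff' measurableSet_Ioo).2 (ae_of_all _ fun y hy => ?_)
        rw [Real.norm_eq_abs]
        refine (hGrowth y (hsub hy)).trans (mul_le_mul_of_nonneg_left ?_ hG0)
        exact Real.rpow_le_rpow (le_of_lt (hsub hy)) hy.2.le hα0.le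
    have hN : H ≤ holderPlusNorm α f ∧ G ≤ holderPlusNorm α f := by
      unfold holderPlusNorm
      constructor <;> [linarith; linarith]
    constructor
    · intro a b ha hab
      have hba : (0:ℝ) < b - a := by linarith
      have hfint := hint a b ha hab
      have hpt : ∀ y ∈ Set.Ioo a b,
          |f y - (b - a)⁻¹ * ∫ z in Set.Ioo a b, f z| ≤ H * (b - a) ^ α := by
        intro y hy
        rw [abs_sub_comm]
        have h1 := abs_avg_sub_le hab hfint (f y)
        have h2 : (∫ z in Set.Ioo a b, |f z - f y|) ≤ (b - a) * (H * (b - a) ^ α) := by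
          rw [← setIntegral_const_Ioo a b (H * (b - a) ^ α) hab.le]
          refine setIntegral_mono_on ((hfint.sub (integrableOn_const_Ioo a b (f y))).abs)
            (integrableOn_const_Ioo _ _ _) measurableSet_Ioo fun z hz => ?_
          refine (hHolder z y (lt_of_le_of_lt ha hz.1) (lt_of_le_of_lt ha hy.1)).trans
            (mul_le_mul_of_nonneg_left ?_ hH0)
          refine Real.rpow_le_rpow (abs_nonneg _) ?_ hα0.le
          rw [abs_le]
          constructor <;> [nlinarith [hz.1, hz.2, hy.1, hy.2]; nlinarith [hz.1, hz.2, hy.1, hy.2]]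
        calc |(b - a)⁻¹ * (∫ z in Set.Ioo a b, f z) - f y|
            ≤ (b - a)⁻¹ * ∫ z in Set.Ioo a b, |f z - f y| := h1
          _ ≤ (b - a)⁻¹ * ((b - a) * (H * (b - a) ^ α)) :=
              mul_le_mul_of_nonneg_left h2 (inv_nonneg.2 hba.le)
          _ = H * (b - a) ^ α := by field_simp
      calc (∫⁻ y in Set.Ioo a b, (‖f y - (b - a)⁻¹ * ∫ z in Set.Ioo a b, f z‖₊ : ENNReal))
          ≤ ∫⁻ _ in Set.Ioo a b, ENNReal.ofReal (H * (b - a) ^ α) := by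
            refine setLIntegral_mono' measurableSet_Ioo fun y hy => ?_
            rw [← enorm_eq_nnnorm, ← ofReal_norm, Real.norm_eq_abs]
            exact ENNReal.ofReal_le_ofReal (hpt y hy)
        _ = ENNReal.ofReal (H * (b - a) ^ α) * volume (Set.Ioo a b) := setLIntegral_const _ _
        _ = ENNReal.ofReal (H * (b - a) ^ α * (b - a)) := by
            rw [Real.volume_Ioo, ← ENNReal.ofReal_mul (by positivity)]
        _ ≤ ENNReal.ofReal (1 * holderPlusNorm α f * (b - a) ^ (1 + α)) := by
            refine ENNReal.ofReal_le_ofReal ?_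
            rw [Real.rpow_add hba, Real.rpow_one, one_mul]
            nlinarith [mul_nonneg (mul_nonneg (sub_nonneg.2 hN.1)
              (Real.rpow_nonneg hba.le α)) hba.le]
    · intro b hb
      have hpt : ∀ y ∈ Set.Ioo (0:ℝ) b, |f y| ≤ G * b ^ α := fun y hy =>
        (hGrowth y hy.1).trans (mul_le_mul_of_nonneg_left
          (Real.rpow_le_rpow hy.1.le hy.2.le hα0.le) hG0)
      calc (∫⁻ y in Set.Ioo (0:ℝ) b, (‖f y‖₊ : ENNReal))
          ≤ ∫⁻ _ in Set.Ioo (0:ℝ) b, ENNReal.ofReal (G * b ^ α) := by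
            refine setLIntegral_mono' measurableSet_Ioo fun y hy => ?_
            rw [← enorm_eq_nnnorm, ← ofReal_norm, Real.norm_eq_abs]
            exact ENNReal.ofReal_le_ofReal (hpt y hy)
        _ = ENNReal.ofReal (G * b ^ α) * volume (Set.Ioo (0:ℝ) b) := setLIntegral_const _ _
        _ = ENNReal.ofReal (G * b ^ α * b) := by
            rw [Real.volume_Ioo, sub_zero, ← ENNReal.ofReal_mul (by positivity)]
        _ ≤ ENNReal.ofReal (1 * holderPlusNorm α f * b ^ (1 + α)) := by
            refine ENNReal.ofReal_le_ofReal ?_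
            rw [Real.rpow_add hb, Real.rpow_one, one_mul]
            nlinarith [mul_nonneg (mul_nonneg (sub_nonneg.2 hN.2)
              (Real.rpow_nonneg hb.le α)) hb.le]
  · -- converse direction
    intro C hC h1 h2
    set r : ℝ := (1/2 : ℝ) ^ α with hrdef
    have hf_int : ∀ b : ℝ, 0 < b → IntegrableOn f (Set.Ioo 0 b) := by
      intro b hb
      refine ⟨(hcont.mono (fun z hz => hz.1)).aestronglyMeasurable measurableSet_Ioo, ?_⟩
      exact lt_of_le_of_lt (h2 b hb) ENNReal.ofReal_lt_top
    have hsub : ∀ a b : ℝ, 0 ≤ a → Set.Ioo a b ⊆ Set.Ioo 0 b :=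
      fun a b ha z hz => ⟨lt_of_le_of_lt ha hz.1, hz.2⟩
    have hosc_real : ∀ a b : ℝ, 0 ≤ a → a < b →
        (∫ y in Set.Ioo a b, |f y - (b - a)⁻¹ * ∫ z in Set.Ioo a b, f z|)
          ≤ C * (b - a) ^ (1 + α) := by
      intro a b ha hab
      have hb : (0:ℝ) < b := lt_of_le_of_lt ha hab
      have hi : IntegrableOn (fun y => f y - (b - a)⁻¹ * ∫ z in Set.Ioo a b, f z)
          (Set.Ioo a b) :=
        ((hf_int b hb).mono_set (hsub a b ha)).sub (integrableOn_const_Ioo _ _ _)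
      have heq := ofReal_integral_norm_eq_lintegral_enorm hi
      have h3 : ENNReal.ofReal (∫ y in Set.Ioo a b,
          ‖f y - (b - a)⁻¹ * ∫ z in Set.Ioo a b, f z‖) ≤ ENNReal.ofReal (C * (b - a) ^ (1 + α)) := by
        rw [heq]; exact h1 a b ha hab
      rw [ENNReal.ofReal_le_ofReal_iff
        (mul_nonneg hC.le (Real.rpow_nonneg (by linarith) _))] at h3
      simpa [Real.norm_eq_abs] using h3
    have hgrow_real : ∀ b : ℝ, 0 < b → (∫ y in Set.Ioo (0:ℝ) b, |f y|) ≤ C * b ^ (1 + α) := by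
      intro b hb
      have heq := ofReal_integral_norm_eq_lintegral_enorm (hf_int b hb)
      have h3 : ENNReal.ofReal (∫ y in Set.Ioo (0:ℝ) b, ‖f y‖)
          ≤ ENNReal.ofReal (C * b ^ (1 + α)) := by
        rw [heq]; exact h2 b hb
      rw [ENNReal.ofReal_le_ofReal_iff (by positivity)] at h3
      simpa [Real.norm_eq_abs] using h3
    -- endpoint estimates
    have hleft : ∀ x y : ℝ, 0 < x → x < y →
        |f x - (y - x)⁻¹ * ∫ z in Set.Ioo x y, f z| ≤ 2 * C * (y - x) ^ α / (1 - r) := by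
      intro x y hx hxy
      have hℓ : (0:ℝ) < y - x := by linarith
      have key := key_endpoint hα0 hC.le hf_int hosc_real hcont
        (fun _ => x) (fun n => x + (y - x) * (1/2 : ℝ) ^ n)
        (fun n => hx.le)
        (fun n => lt_add_of_pos_right x (by positivity))
        (y - x) (fun n => by ring)
        (fun n z hz => ⟨hz.1, hz.2.trans_le (by
          have : (1/2 : ℝ) ^ (n+1) ≤ (1/2 : ℝ) ^ n :=
            pow_le_pow_of_le_one (by norm_num) (by norm_num) (Nat.le_succ n)
          nlinarith)⟩)
        x hx
        (fun n z hz => by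
          rw [abs_of_pos (sub_pos.2 hz.1)]; linarith [hz.2])
      simp only [pow_zero, mul_one] at key
      rw [show x + (y - x) = y by ring, ← hrdef] at key
      exact key
    have hright : ∀ a b : ℝ, 0 ≤ a → a < b →
        |f b - (b - a)⁻¹ * ∫ z in Set.Ioo a b, f z| ≤ 2 * C * (b - a) ^ α / (1 - r) := by
      intro a b ha hab
      have hℓ : (0:ℝ) < b - a := by linarith
      have hb : (0:ℝ) < b := lt_of_le_of_lt ha hab
      have key := key_endpoint hα0 hC.le hf_int hosc_real hcont
        (fun n => b - (b - a) * (1/2 : ℝ) ^ n) (fun _ => b)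
        (fun n => by
          have h1' : (1/2 : ℝ) ^ n ≤ 1 := pow_le_one₀ (by norm_num) (by norm_num)
          nlinarith)
        (fun n => by nlinarith [pow_pos (by norm_num : (0:ℝ) < 1/2) n])
        (b - a) (fun n => by ring)
        (fun n z hz => ⟨by
          have : (1/2 : ℝ) ^ (n+1) ≤ (1/2 : ℝ) ^ n :=
            pow_le_pow_of_le_one (by norm_num) (by norm_num) (Nat.le_succ n)
          have := hz.1; nlinarith, hz.2⟩)
        b hb
        (fun n z hz => by
          rw [abs_sub_comm, abs_of_pos (sub_pos.2 hz.2)]; linarith [hz.1])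
      simp only [pow_zero, mul_one] at key
      rw [show b - (b - a) = a by ring, ← hrdef] at key
      exact key
    have h1r : (0:ℝ) < 1 - r := by linarith
    -- Hölder estimate
    have hhold0 : ∀ x y : ℝ, 0 < x → x < y →
        |f x - f y| ≤ 4 * C / (1 - r) * (y - x) ^ α := by
      intro x y hx hxy
      have hy : (0:ℝ) < y := hx.trans hxy
      have hl := hleft x y hx hxy
      have hr' := hright x y hx.le hxy
      have habs : |f x - f y| ≤ |f x - (y - x)⁻¹ * ∫ z in Set.Ioo x y, f z|
          + |f y - (y - x)⁻¹ * ∫ z in Set.Ioo x y, f z| := by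
        rw [abs_sub_comm (f y)]
        exact abs_sub_le _ _ _
      have : 2 * C * (y - x) ^ α / (1 - r) + 2 * C * (y - x) ^ α / (1 - r)
          = 4 * C / (1 - r) * (y - x) ^ α := by field_simp; ring
      linarith
    have hhold : ∀ x y : ℝ, 0 < x → 0 < y → x ≠ y →
        |f x - f y| ≤ 4 * C / (1 - r) * |x - y| ^ α := by
      intro x y hx hy hxy
      rcases lt_or_gt_of_ne hxy with h | h
      · rw [abs_sub_comm x y, abs_of_pos (sub_pos.2 h)]
        exact hhold0 x y hx h
      · rw [abs_of_pos (sub_pos.2 h), abs_sub_comm]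
        exact hhold0 y x hy h
    -- growth estimate
    have hgrowb : ∀ b : ℝ, 0 < b → |f b| ≤ 3 * C / (1 - r) * b ^ α := by
      intro b hb
      have hr' := hright 0 b le_rfl hb
      rw [sub_zero] at hr'
      have havg : |b⁻¹ * ∫ z in Set.Ioo (0:ℝ) b, f z| ≤ C * b ^ α := by
        rw [abs_mul, abs_inv, abs_of_pos hb]
        have hle : |∫ z in Set.Ioo (0:ℝ) b, f z| ≤ ∫ z in Set.Ioo (0:ℝ) b, |f z| := by
          simpa [Real.norm_eq_abs] using
            norm_integral_le_integral_norm (μ := volume.restrict (Set.Ioo (0:ℝ) b)) f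
        have : b⁻¹ * |∫ z in Set.Ioo (0:ℝ) b, f z| ≤ b⁻¹ * (C * b ^ (1 + α)) :=
          mul_le_mul_of_nonneg_left (hle.trans (hgrow_real b hb)) (inv_nonneg.2 hb.le)
        refine this.trans_eq ?_
        rw [Real.rpow_add hb, Real.rpow_one]
        field_simp
      have htri : |f b| ≤ |f b - b⁻¹ * ∫ z in Set.Ioo (0:ℝ) b, f z|
          + |b⁻¹ * ∫ z in Set.Ioo (0:ℝ) b, f z| := by
        have := abs_sub_abs_le_abs_sub (f b) (b⁻¹ * ∫ z in Set.Ioo (0:ℝ) b, f z)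
        have h' := abs_add_le (f b - b⁻¹ * ∫ z in Set.Ioo (0:ℝ) b, f z)
          (b⁻¹ * ∫ z in Set.Ioo (0:ℝ) b, f z)
        simpa using h'
      have hCb : C * b ^ α ≤ C * b ^ α / (1 - r) := by
        rw [le_div_iff₀ h1r]
        nlinarith [mul_nonneg hC.le (Real.rpow_nonneg hb.le α), hr1]
      have hsum : 2 * C * b ^ α / (1 - r) + C * b ^ α / (1 - r)
          = 3 * C / (1 - r) * b ^ α := by field_simp; ring
      linarith
    -- assemble
    have hbH : BddAbove (holderRatioSet α f) := by
      refine ⟨4 * C / (1 - r), fun v hv => ?_⟩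
      obtain ⟨x, y, hx, hy, hxy, rfl⟩ := hv
      have hpos : (0:ℝ) < |x - y| ^ α :=
        Real.rpow_pos_of_pos (abs_pos.2 (sub_ne_zero.2 hxy)) α
      rw [div_le_iff₀ hpos]
      exact hhold x y hx hy hxy
    have hbG : BddAbove (growthRatioSet α f) := by
      refine ⟨3 * C / (1 - r), fun v hv => ?_⟩
      obtain ⟨x, hx, rfl⟩ := hv
      have hpos : (0:ℝ) < x ^ α := Real.rpow_pos_of_pos hx α
      rw [div_le_iff₀ hpos]
      exact hgrowb x hx
    refine ⟨⟨hcont, hbH, hbG⟩, ?_⟩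
    have hs1 : sSup (holderRatioSet α f) ≤ 4 * C / (1 - r) := by
      refine csSup_le (holderRatioSet_nonempty α f) fun v hv => ?_
      obtain ⟨x, y, hx, hy, hxy, rfl⟩ := hv
      have hpos : (0:ℝ) < |x - y| ^ α :=
        Real.rpow_pos_of_pos (abs_pos.2 (sub_ne_zero.2 hxy)) α
      rw [div_le_iff₀ hpos]
      exact hhold x y hx hy hxy
    have hs2 : sSup (growthRatioSet α f) ≤ 3 * C / (1 - r) := by
      refine csSup_le (growthRatioSet_nonempty α f) fun v hv => ?_
      obtain ⟨x, hx, rfl⟩ := hv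
      have hpos : (0:ℝ) < x ^ α := Real.rpow_pos_of_pos hx α
      rw [div_le_iff₀ hpos]
      exact hgrowb x hx
    unfold holderPlusNorm
    have : 4 * C / (1 - r) + 3 * C / (1 - r) = 7 / (1 - r) * C := by field_simp; ring
    linarith
end
end
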